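/- Let b > 0 and μ₀ < μ₁ be real numbers and let m = (μ₀ + μ₁)/2. If the member score has the Laplace distribution with mean μ₁ and scale b and the non-member score has the Laplace distribution with mean μ₀ and scale b, then (1/2)·ℙ(member score ≥ m) + (1/2)·ℙ(non-member score < m) = 1 − (1/2)·exp( −(μ₁ − μ₀)/(2b) ). -/

import Mathlib

open MeasureTheory

/-- The Laplace distribution with mean `μ` and scale `b`, given by the density
`x ↦ (1/(2b))·exp(−|x−μ|/b)` with respect to Lebesgue measure. -/
noncomputable def laplaceMeasure (μ b : ℝ) : Measure ℝ :=
  volume.withDensity fun x => ENNReal.ofReal ((1 / (2 * b)) * Real.exp (-|x - μ| / b))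

open Real Set Filter Topology


lemma hasDerivAt_aux (b : ℝ) (hb : 0 < b) (μ : ℝ) (x : ℝ) :
    HasDerivAt (fun x : ℝ => -b * exp (-(x - μ) / b)) (exp (-(x - μ) / b)) x := by
  have h1 : HasDerivAt (fun x : ℝ => -(x - μ) / b) (-1 / b) x := by
    simpa using (((hasDerivAt_id x).sub_const μ).neg.div_const b)
  have h2 := h1.exp.const_mul (-b)
  refine h2.congr_deriv ?_
  linear_combination (exp (-(x - μ) / b)) * (mul_inv_cancel₀ hb.ne' : b * b⁻¹ = 1)

lemma tendsto_aux (b : ℝ) (hb : 0 < b) (μ : ℝ) :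
    Tendsto (fun x : ℝ => -b * exp (-(x - μ) / b)) atTop (𝓝 0) := by
  have h1 : Tendsto (fun x : ℝ => -(x - μ) / b) atTop atBot := by
    apply Tendsto.atBot_div_const hb
    have := tendsto_neg_atTop_atBot.comp (tendsto_atTop_add_const_right atTop (-μ) tendsto_id)
    refine this.congr fun x => ?_
    simp [Function.comp]
    ring
  have := (Real.tendsto_exp_atBot.comp h1).const_mul (-b)
  simpa using this

lemma integrableOn_aux (b : ℝ) (hb : 0 < b) (μ c : ℝ) :
    IntegrableOn (fun x : ℝ => exp (-(x - μ) / b)) (Ioi c) :=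
  integrableOn_Ioi_deriv_of_nonneg' (fun x _ => hasDerivAt_aux b hb μ x)
    (fun x _ => (exp_pos _).le) (tendsto_aux b hb μ)

lemma integral_aux (b : ℝ) (hb : 0 < b) (μ c : ℝ) :
    ∫ x in Ioi c, exp (-(x - μ) / b) = b * exp (-(c - μ) / b) := by
  have := integral_Ioi_of_hasDerivAt_of_nonneg' (a := c) (fun x _ => hasDerivAt_aux b hb μ x)
    (fun x _ => (exp_pos _).le) (tendsto_aux b hb μ)
  rw [this]; ring



lemma integrableOn_aux2 (b : ℝ) (hb : 0 < b) (μ c : ℝ) :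
    IntegrableOn (fun x : ℝ => exp ((x - μ) / b)) (Iio c) := by
  have hg : Integrable ((Ioi (-c)).indicator fun x : ℝ => exp (-(x - (-μ)) / b)) :=
    (integrable_indicator_iff measurableSet_Ioi).2 (integrableOn_aux b hb (-μ) (-c))
  have h2 := hg.comp_mul_left' (R := (-1 : ℝ)) (by norm_num)
  have heq : ((Iio c).indicator fun x : ℝ => exp ((x - μ) / b))
      = fun x => ((Ioi (-c)).indicator (fun y : ℝ => exp (-(y - (-μ)) / b))) (-1 * x) := by
    ext x
    by_cases hx : x < c <;>
      simp [Set.indicator_apply, hx, neg_lt_neg_iff, neg_lt] <;>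
      first
        | (congr 1; ring)
        | skip
  exact (integrable_indicator_iff measurableSet_Iio).1 (by rw [heq]; exact h2)

lemma integral_aux2 (b : ℝ) (hb : 0 < b) (μ c : ℝ) :
    ∫ x in Iio c, exp ((x - μ) / b) = b * exp ((c - μ) / b) := by
  have h0 : ∫ x in Iio c, exp ((x - μ) / b) = ∫ x in Iic c, exp ((x - μ) / b) :=
    setIntegral_congr_set Iio_ae_eq_Iic
  have h1 : ∫ x in Ioi (-c), (fun x : ℝ => exp ((x - μ) / b)) (-x)
      = ∫ x in Iic (-(-c)), exp ((x - μ) / b) := integral_comp_neg_Ioi (-c) (fun x : ℝ => exp ((x - μ) / b))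
  rw [neg_neg] at h1
  have hfun : (fun x : ℝ => (fun x : ℝ => exp ((x - μ) / b)) (-x))
      = fun x : ℝ => exp (-(x - (-μ)) / b) := by
    funext x; show exp ((-x - μ) / b) = _; congr 1; ring
  rw [h0, ← h1, hfun, integral_aux b hb (-μ) (-c)]
  congr 1; ring

lemma laplace_Ici (b : ℝ) (hb : 0 < b) (μ c : ℝ) (h : μ ≤ c) :
    laplaceMeasure μ b (Set.Ici c) = ENNReal.ofReal ((1 / 2) * exp (-(c - μ) / b)) := by
  rw [laplaceMeasure, withDensity_apply _ measurableSet_Ici,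
    setLIntegral_congr (Ioi_ae_eq_Ici (a := c)).symm]
  have h1 : ∫⁻ x in Ioi c, ENNReal.ofReal ((1 / (2 * b)) * Real.exp (-|x - μ| / b))
      = ∫⁻ x in Ioi c, ENNReal.ofReal ((1 / (2 * b)) * Real.exp (-(x - μ) / b)) := by
    refine setLIntegral_congr_fun measurableSet_Ioi (fun x hx => ?_)
    rw [abs_of_nonneg (by linarith [mem_Ioi.1 hx])]
  have hint : Integrable (fun x : ℝ => (1 / (2 * b)) * exp (-(x - μ) / b))
      (volume.restrict (Ioi c)) := (integrableOn_aux b hb μ c).const_mul _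
  rw [h1, ← ofReal_integral_eq_lintegral_ofReal hint
      (Filter.Eventually.of_forall fun x => by positivity),
    MeasureTheory.integral_const_mul, integral_aux b hb μ c]
  congr 1
  field_simp

lemma laplace_Iio (b : ℝ) (hb : 0 < b) (μ c : ℝ) (h : c ≤ μ) :
    laplaceMeasure μ b (Set.Iio c) = ENNReal.ofReal ((1 / 2) * exp ((c - μ) / b)) := by
  rw [laplaceMeasure, withDensity_apply _ measurableSet_Iio]
  have h1 : ∫⁻ x in Iio c, ENNReal.ofReal ((1 / (2 * b)) * Real.exp (-|x - μ| / b))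
      = ∫⁻ x in Iio c, ENNReal.ofReal ((1 / (2 * b)) * Real.exp ((x - μ) / b)) := by
    refine setLIntegral_congr_fun measurableSet_Iio (fun x hx => ?_)
    rw [abs_of_nonpos (by linarith [mem_Iio.1 hx]), neg_neg]
  have hint : Integrable (fun x : ℝ => (1 / (2 * b)) * exp ((x - μ) / b))
      (volume.restrict (Iio c)) := (integrableOn_aux2 b hb μ c).const_mul _
  rw [h1, ← ofReal_integral_eq_lintegral_ofReal hint
      (Filter.Eventually.of_forall fun x => by positivity),
    MeasureTheory.integral_const_mul, integral_aux2 b hb μ c]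
  congr 1
  field_simp

lemma laplace_univ (b : ℝ) (hb : 0 < b) (μ : ℝ) :
    laplaceMeasure μ b Set.univ = 1 := by
  have : (Set.univ : Set ℝ) = Set.Iio μ ∪ Set.Ici μ := (Iio_union_Ici).symm
  rw [this, measure_union (Iio_disjoint_Ici le_rfl) measurableSet_Ici,
    laplace_Iio b hb μ μ le_rfl, laplace_Ici b hb μ μ le_rfl]
  simp only [sub_self, zero_div, neg_zero, exp_zero, mul_one]
  rw [← ENNReal.ofReal_add (by norm_num) (by norm_num)]
  norm_num

/-- Balanced accuracy of the midpoint-threshold test between a member score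
distributed `Laplace(μ₁, b)` and a non-member score distributed `Laplace(μ₀, b)`:
it equals `1 − (1/2)·exp(−(μ₁ − μ₀)/(2b))`. -/
theorem laplace_midpoint_balanced_accuracy
    (b : ℝ) (hb : 0 < b) (μ₀ μ₁ : ℝ) (hμ : μ₀ < μ₁) :
    2⁻¹ * laplaceMeasure μ₁ b (Set.Ici ((μ₀ + μ₁) / 2))
      + 2⁻¹ * laplaceMeasure μ₀ b (Set.Iio ((μ₀ + μ₁) / 2))
      = ENNReal.ofReal (1 - (1 / 2) * Real.exp (-(μ₁ - μ₀) / (2 * b))) := by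
  set m := (μ₀ + μ₁) / 2 with hm
  set E := ENNReal.ofReal ((1 / 2) * Real.exp (-(μ₁ - μ₀) / (2 * b))) with hE
  have h1 : laplaceMeasure μ₁ b (Set.Iio m) = E := by
    rw [laplace_Iio b hb μ₁ m (by rw [hm]; linarith), hE]
    congr 2
    rw [hm]
    field_simp
    ring
  have h2 : laplaceMeasure μ₀ b (Set.Ici m) = E := by
    rw [laplace_Ici b hb μ₀ m (by rw [hm]; linarith), hE]
    congr 2
    rw [hm]
    field_simp
    ring
  have hu1 : laplaceMeasure μ₁ b (Set.Ici m) + laplaceMeasure μ₁ b (Set.Iio m) = 1 := by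
    rw [add_comm, ← measure_union (Iio_disjoint_Ici le_rfl) measurableSet_Ici, Iio_union_Ici,
      laplace_univ b hb μ₁]
  have hu2 : laplaceMeasure μ₀ b (Set.Iio m) + laplaceMeasure μ₀ b (Set.Ici m) = 1 := by
    rw [← measure_union (Iio_disjoint_Ici le_rfl) measurableSet_Ici, Iio_union_Ici,
      laplace_univ b hb μ₀]
  have e1 : laplaceMeasure μ₁ b (Set.Ici m) = 1 - E := by
    rw [← h1]; exact ENNReal.eq_sub_of_add_eq (h1 ▸ ENNReal.ofReal_ne_top) hu1
  have e2 : laplaceMeasure μ₀ b (Set.Iio m) = 1 - E := by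
    rw [← h2]; exact ENNReal.eq_sub_of_add_eq (h2 ▸ ENNReal.ofReal_ne_top) hu2
  rw [e1, e2, ← add_mul, ENNReal.inv_two_add_inv_two, one_mul, hE,
    ← ENNReal.ofReal_one, ← ENNReal.ofReal_sub _ (by positivity)]
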